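/- Let $\mathbf{d} = (d_1,\dots,d_n)$ with $d = \sum_i d_i$, let $m \le d/2$, and let $\mathcal{W}_{\mathbf{d},m}$ be the set of weak compositions $\beta$ of $m$ of length $n$ with $\beta_i \le d_i$ for all $i$. Then $\#\mathcal{W}_{\mathbf{d},m-1} \le \#\mathcal{W}_{\mathbf{d},m}$, i.e., the sequence of sizes $\#\mathcal{W}_{\mathbf{d},0}, \#\mathcal{W}_{\mathbf{d},1}, \dots, \#\mathcal{W}_{\mathbf{d},\lfloor d/2 \rfloor}$ is weakly increasing. -/

import Mathlib

open Finset

private def Wc {n : ℕ} (d : Fin n → ℕ) (m : ℕ) : Finset (Fin n → ℕ) :=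
  (Fintype.piFinset fun i => Finset.range (d i + 1)).filter fun β => ∑ i, β i = m

private lemma mem_Wc {n : ℕ} {d : Fin n → ℕ} {m : ℕ} {β : Fin n → ℕ} :
    β ∈ Wc d m ↔ (∀ i, β i ≤ d i) ∧ ∑ i, β i = m := by
  simp [Wc, Nat.lt_succ_iff]

private lemma Wc_symm {n : ℕ} {d : Fin n → ℕ} {m : ℕ} (h : m ≤ ∑ i, d i) :
    (Wc d m).card = (Wc d (∑ i, d i - m)).card := by
  refine Finset.card_bij' (fun β _ => fun i => d i - β i) (fun β _ => fun i => d i - β i)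
    ?hi ?hj ?li ?ri
  case hi =>
    intro β hβ
    rw [mem_Wc] at hβ ⊢
    refine ⟨fun i => Nat.sub_le _ _, ?_⟩
    have : ∑ i, (d i - β i) + ∑ i, β i = ∑ i, d i := by
      rw [← Finset.sum_add_distrib]
      exact Finset.sum_congr rfl fun i _ => by have := hβ.1 i; omega
    omega
  case hj =>
    intro β hβ
    rw [mem_Wc] at hβ ⊢
    refine ⟨fun i => Nat.sub_le _ _, ?_⟩
    have : ∑ i, (d i - β i) + ∑ i, β i = ∑ i, d i := by
      rw [← Finset.sum_add_distrib]
      exact Finset.sum_congr rfl fun i _ => by have := hβ.1 i; omega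
    omega
  case li =>
    intro β hβ
    rw [mem_Wc] at hβ
    dsimp only
    funext i
    have := hβ.1 i
    omega
  case ri =>
    intro β hβ
    rw [mem_Wc] at hβ
    dsimp only
    funext i
    have := hβ.1 i
    omega

private lemma Wc_rec {n : ℕ} (d : Fin (n + 1) → ℕ) (m : ℕ) :
    (Wc d m).card =
      ∑ j ∈ Finset.range (d 0 + 1),
        if j ≤ m then (Wc (Fin.tail d) (m - j)).card else 0 := by
  rw [Finset.card_eq_sum_card_fiberwise (f := fun β => β 0)
    (t := Finset.range (d 0 + 1)) (fun β hβ => by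
      rw [Finset.mem_coe, mem_Wc] at hβ; simp [Nat.lt_succ_iff, hβ.1 0])]
  refine Finset.sum_congr rfl fun j hj => ?_
  rw [Finset.mem_range, Nat.lt_succ_iff] at hj
  by_cases hjm : j ≤ m
  · rw [if_pos hjm]
    refine Finset.card_bij' (fun β _ => Fin.tail β) (fun γ _ => Fin.cons j γ) ?hi ?hj ?li ?ri
    case hi =>
      intro β hβ
      simp only [Finset.mem_filter, mem_Wc] at hβ
      obtain ⟨⟨h1, h2⟩, h3⟩ := hβ
      rw [mem_Wc]
      refine ⟨fun i => h1 i.succ, ?_⟩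
      rw [Fin.sum_univ_succ, h3] at h2
      have : ∑ i, Fin.tail β i = ∑ i : Fin n, β i.succ := rfl
      omega
    case hj =>
      intro γ hγ
      rw [mem_Wc] at hγ
      obtain ⟨h1, h2⟩ := hγ
      simp only [Finset.mem_filter, mem_Wc]
      refine ⟨⟨fun i => ?_, ?_⟩, by simp⟩
      · refine Fin.cases ?_ ?_ i
        · simpa using hj
        · intro i'
          simpa [Fin.tail] using h1 i'
      · rw [Fin.sum_univ_succ]
        simp only [Fin.cons_zero, Fin.cons_succ]
        have h4 : ∑ i : Fin n, (Fin.cons j γ : Fin (n+1) → ℕ) i.succ = m - j := h2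
        omega
    case li =>
      intro β hβ
      simp only [Finset.mem_filter] at hβ
      rw [← hβ.2]
      exact Fin.cons_self_tail β
    case ri =>
      intro γ hγ
      exact Fin.tail_cons (α := fun _ => ℕ) j γ
  · rw [if_neg hjm]
    rw [Finset.card_eq_zero]
    ext β
    simp only [Finset.mem_filter, mem_Wc, Finset.notMem_empty, iff_false]
    rintro ⟨⟨h1, h2⟩, h3⟩
    have : β 0 ≤ ∑ i, β i := Finset.single_le_sum (fun i _ => Nat.zero_le _) (Finset.mem_univ 0)
    omega

private lemma mono_of_adj (g : ℕ → ℕ) (D : ℕ)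
    (adj : ∀ m, 1 ≤ m → 2 * m ≤ D → g (m - 1) ≤ g m) :
    ∀ u v, u ≤ v → 2 * v ≤ D → g u ≤ g v := by
  intro u v
  induction v with
  | zero =>
    intro h _
    have : u = 0 := Nat.le_zero.mp h
    subst this; exact le_rfl
  | succ v ih =>
    intro huv hD
    rcases Nat.lt_or_ge u (v + 1) with h | h
    · calc g u ≤ g v := ih (by omega) (by omega)
        _ ≤ g (v + 1) := by have := adj (v + 1) (by omega) hD; simpa using this
    · have : u = v + 1 := by omega
      subst this; exact le_rfl

private lemma Wc_mono : ∀ (n : ℕ) (d : Fin n → ℕ) (u v : ℕ), u ≤ v → 2 * v ≤ ∑ i, d i →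
    (Wc d u).card ≤ (Wc d v).card := by
  intro n
  induction n with
  | zero =>
    intro d u v huv h
    simp only [Finset.univ_eq_empty, Finset.sum_empty] at h
    have hv : v = 0 := by omega
    have hu : u = 0 := by omega
    subst hv; subst hu; exact le_rfl
  | succ n ih =>
    intro d u v huv hv
    have htot : ∑ i, d i = d 0 + ∑ i, Fin.tail d i := by
      rw [Fin.sum_univ_succ]; rfl
    have adj : ∀ m, 1 ≤ m → 2 * m ≤ ∑ i, d i → (Wc d (m - 1)).card ≤ (Wc d m).card := by
      intro m hm hm2
      rw [Wc_rec, Wc_rec]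
      have h1 := Finset.sum_range_succ
        (fun j => if j ≤ m then (Wc (Fin.tail d) (m - j)).card else 0) (d 0 + 1)
      have h2 := Finset.sum_range_succ'
        (fun j => if j ≤ m then (Wc (Fin.tail d) (m - j)).card else 0) (d 0 + 1)
      have h3 : ∑ j ∈ Finset.range (d 0 + 1),
            (if j + 1 ≤ m then (Wc (Fin.tail d) (m - (j + 1))).card else 0)
          = ∑ j ∈ Finset.range (d 0 + 1),
            (if j ≤ m - 1 then (Wc (Fin.tail d) (m - 1 - j)).card else 0) := by
        refine Finset.sum_congr rfl fun j _ => ?_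
        by_cases h : j + 1 ≤ m
        · rw [if_pos h, if_pos (by omega)]
          have : m - (j + 1) = m - 1 - j := by omega
          rw [this]
        · rw [if_neg h, if_neg (by omega)]
      simp only [h3] at h2
      have h4 : (if (0:ℕ) ≤ m then (Wc (Fin.tail d) (m - 0)).card else 0)
          = (Wc (Fin.tail d) m).card := by
        rw [if_pos (Nat.zero_le m)]
        congr 1
      have key : (if d 0 + 1 ≤ m then (Wc (Fin.tail d) (m - (d 0 + 1))).card else 0)
          ≤ (Wc (Fin.tail d) m).card := by
        by_cases h : d 0 + 1 ≤ m
        · rw [if_pos h]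
          have hmDt : m ≤ ∑ i, Fin.tail d i := by omega
          rcases le_or_gt (2 * m) (∑ i, Fin.tail d i) with h5 | h5
          · exact ih _ _ _ (by omega) h5
          · rw [Wc_symm hmDt]
            exact ih _ _ _ (by omega) (by omega)
        · rw [if_neg h]
          exact Nat.zero_le _
      rw [h4] at h2
      -- h1 : S(d0+2) = S_m + K ; h2 : S(d0+2) = S_{m-1}' + c m ; key : K ≤ c m
      omega
    exact mono_of_adj (fun k => (Wc d k).card) (∑ i, d i) adj u v huv hv

theorem card_boundedCompositions_monotone
    {n : ℕ} (d : Fin n → ℕ) (D : ℕ) (hD : D = ∑ i, d i)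
    (m : ℕ) (hm : 1 ≤ m) (hm2 : 2 * m ≤ D) :
    Nat.card {β : Fin n → ℕ // (∀ i, β i ≤ d i) ∧ ∑ i, β i = m - 1} ≤
      Nat.card {β : Fin n → ℕ // (∀ i, β i ≤ d i) ∧ ∑ i, β i = m} := by
  have hcard : ∀ k : ℕ, Nat.card {β : Fin n → ℕ // (∀ i, β i ≤ d i) ∧ ∑ i, β i = k}
      = (Wc d k).card := by
    intro k
    have hset : {β : Fin n → ℕ | (∀ i, β i ≤ d i) ∧ ∑ i, β i = k} = ↑(Wc d k) := by
      ext β; simp [mem_Wc]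
    rw [← Set.ncard_coe_finset, ← hset]
    rfl
  rw [hcard, hcard]
  exact Wc_mono n d (m - 1) m (by omega) (by omega)
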